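/- Let u : ℝ → ℝ be three times continuously differentiable and let Δt > 0. Set t_k = t₀ + kΔt for k = 0,1,2,3. Then |(10u(t₃) − 15u(t₂) + 6u(t₁) − u(t₀))/(6Δt) − u'(t₃)|² ≤ (7/3) Δt³ ∫_{t₀}^{t₃} |u'''(s)|² ds. -/

import Mathlib

open intervalIntegral

private lemma sum3_sq (x y z : ℝ) : (x + y + z)^2 ≤ 3*(x^2 + y^2 + z^2) := by
  nlinarith [sq_nonneg (x - y), sq_nonneg (y - z), sq_nonneg (x - z)]

private lemma my_cs (f g : ℝ → ℝ) (hf : Continuous f) (hg : Continuous g) (a b : ℝ) (hab : a ≤ b) :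
    (∫ s in a..b, f s * g s)^2 ≤ (∫ s in a..b, f s^2) * (∫ s in a..b, g s^2) := by
  set A := ∫ s in a..b, f s^2 with hA
  set B := ∫ s in a..b, f s * g s with hB
  set C := ∫ s in a..b, g s^2 with hC
  have hfi : IntervalIntegrable (fun s => f s^2) MeasureTheory.volume a b :=
    ((hf.pow 2).intervalIntegrable a b)
  have hgi : IntervalIntegrable (fun s => g s^2) MeasureTheory.volume a b :=
    ((hg.pow 2).intervalIntegrable a b)
  have hfgi : IntervalIntegrable (fun s => f s * g s) MeasureTheory.volume a b :=
    ((hf.mul hg).intervalIntegrable a b)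
  have key : ∀ l : ℝ, 0 ≤ A - 2*l*B + l^2*C := by
    intro l
    have h0 : (0:ℝ) ≤ ∫ s in a..b, (f s - l * g s)^2 := by
      apply intervalIntegral.integral_nonneg hab
      intro s _; positivity
    have h1 : (∫ s in a..b, (f s - l * g s)^2)
        = A - 2*l*B + l^2*C := by
      have e : ∀ s, (f s - l * g s)^2
          = f s^2 - (2*l) * (f s * g s) + l^2 * g s^2 := by intro s; ring
      rw [hA, hB, hC]
      rw [intervalIntegral.integral_congr (g := fun s => f s^2 - (2*l) * (f s * g s) + l^2 * g s^2) (fun s _ => e s)]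
      rw [intervalIntegral.integral_add ((hfi.sub (hfgi.const_mul _))) (hgi.const_mul _),
        intervalIntegral.integral_sub hfi (hfgi.const_mul _),
        intervalIntegral.integral_const_mul, intervalIntegral.integral_const_mul]
    linarith [h1 ▸ h0]
  have hCnn : 0 ≤ C := intervalIntegral.integral_nonneg hab (fun s _ => sq_nonneg _)
  rcases eq_or_lt_of_le hCnn with hC0 | hCpos
  · have hB0 : B = 0 := by
      by_contra hB0
      have h1 := key ((A+1)/(2*B))
      rw [← hC0] at h1
      have e : 2*((A+1)/(2*B))*B = A+1 := by field_simp
      nlinarith [h1, e]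
    rw [hB0, ← hC0]; norm_num
  · have h := key (B/C)
    have h2 : A - 2*(B/C)*B + (B/C)^2*C = A - B^2/C := by field_simp; ring
    rw [h2] at h
    have := (div_le_iff₀ hCpos).mp (by linarith : B^2/C ≤ A)
    linarith [this]

private lemma taylor3 (u : ℝ → ℝ) (hu : ContDiff ℝ 3 u) (a b : ℝ) :
    ∫ s in a..b, (b - s)^2/2 * deriv (deriv (deriv u)) s
      = u b - u a - deriv u a * (b - a) - deriv (deriv u) a * (b - a)^2 / 2 := by
  have h1 := (contDiff_succ_iff_deriv.mp (show ContDiff ℝ (2+1) u from hu)).2.2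
  have h2 := (contDiff_succ_iff_deriv.mp (show ContDiff ℝ (1+1) (deriv u) from h1)).2.2
  have h3 := (contDiff_succ_iff_deriv.mp (show ContDiff ℝ (0+1) (deriv (deriv u)) from h2)).2.2
  have hd1 : ∀ x, HasDerivAt u (deriv u x) x :=
    fun x => (hu.differentiable (by norm_num) x).hasDerivAt
  have hd2 : ∀ x, HasDerivAt (deriv u) (deriv (deriv u) x) x :=
    fun x => (h1.differentiable (by norm_num) x).hasDerivAt
  have hd3 : ∀ x, HasDerivAt (deriv (deriv u)) (deriv (deriv (deriv u)) x) x :=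
    fun x => (h2.differentiable (by norm_num) x).hasDerivAt
  set g : ℝ → ℝ := fun s => u s + deriv u s * (b - s) + deriv (deriv u) s * (b - s)^2 / 2 with hg
  have hgd : ∀ s, HasDerivAt g ((b - s)^2/2 * deriv (deriv (deriv u)) s) s := by
    intro s
    have hbs : HasDerivAt (fun s : ℝ => b - s) (-1) s := by
      simpa using (hasDerivAt_const s b).fun_sub (hasDerivAt_id s)
    have hbs2 : HasDerivAt (fun s : ℝ => (b - s)^2) (2 * (b - s) * (-1)) s := by
      simpa using (hbs.fun_pow 2)
    have h := ((hd1 s).fun_add ((hd2 s).fun_mul hbs)).fun_add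
      ((((hd3 s).fun_mul hbs2).div_const 2))
    refine h.congr_deriv ?_
    ring
  have hcont : Continuous fun s => (b - s)^2/2 * deriv (deriv (deriv u)) s :=
    (continuous_const.sub continuous_id).pow 2 |>.div_const 2 |>.mul h3.continuous
  have := integral_eq_sub_of_hasDerivAt (f := g)
    (fun x _ => hgd x) (hcont.intervalIntegrable a b)
  rw [this]
  simp only [hg]
  ring

set_option maxHeartbeats 1000000 in
theorem blended_bdf_consistency
    (u : ℝ → ℝ) (hu : ContDiff ℝ 3 u) (t₀ Δt : ℝ) (hΔt : 0 < Δt) :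
    |(10 * u (t₀ + 3*Δt) - 15 * u (t₀ + 2*Δt) + 6 * u (t₀ + 1*Δt) - u t₀) / (6*Δt)
        - deriv u (t₀ + 3*Δt)| ^ 2 ≤
      (7/3) * Δt^3 * ∫ s in t₀..(t₀ + 3*Δt), |iteratedDeriv 3 u s| ^ 2 := by
  have h1 := (contDiff_succ_iff_deriv.mp (show ContDiff ℝ (2+1) u from hu)).2.2
  have h2 := (contDiff_succ_iff_deriv.mp (show ContDiff ℝ (1+1) (deriv u) from h1)).2.2
  have h3 := (contDiff_succ_iff_deriv.mp (show ContDiff ℝ (0+1) (deriv (deriv u)) from h2)).2.2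
  set d3 : ℝ → ℝ := deriv (deriv (deriv u)) with hd3def
  have hd3c : Continuous d3 := h3.continuous
  have hiter : iteratedDeriv 3 u = d3 := by
    simp [hd3def, iteratedDeriv_succ, iteratedDeriv_zero]
  have h01 : t₀ ≤ t₀ + 1*Δt := by linarith
  have h12 : t₀ + 1*Δt ≤ t₀ + 2*Δt := by linarith
  have h23 : t₀ + 2*Δt ≤ t₀ + 3*Δt := by linarith
  -- integrability helper
  have hk : ∀ (c a b : ℝ), IntervalIntegrable (fun s => (c - s)^2/2 * d3 s)
      MeasureTheory.volume a b := fun c a b =>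
    (((continuous_const.sub continuous_id).pow 2).div_const 2 |>.mul hd3c).intervalIntegrable a b
  -- Taylor expansions around t3
  have T0 := taylor3 u hu (t₀ + 3*Δt) t₀
  have T1 := taylor3 u hu (t₀ + 3*Δt) (t₀ + 1*Δt)
  have T2 := taylor3 u hu (t₀ + 3*Δt) (t₀ + 2*Δt)
  rw [← hd3def] at T0 T1 T2
  -- splitting of integrals
  have hsplit3 : ∀ c : ℝ, (∫ s in t₀..(t₀ + 3*Δt), (c - s)^2/2 * d3 s)
      = (∫ s in t₀..(t₀ + 1*Δt), (c - s)^2/2 * d3 s)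
        + (∫ s in (t₀ + 1*Δt)..(t₀ + 2*Δt), (c - s)^2/2 * d3 s)
        + (∫ s in (t₀ + 2*Δt)..(t₀ + 3*Δt), (c - s)^2/2 * d3 s) := by
    intro c
    rw [integral_add_adjacent_intervals (hk c t₀ (t₀ + 1*Δt)) (hk c (t₀ + 1*Δt) (t₀ + 2*Δt)),
      integral_add_adjacent_intervals (hk c t₀ (t₀ + 2*Δt)) (hk c (t₀ + 2*Δt) (t₀ + 3*Δt))]
  have hsplit2 : ∀ c : ℝ, (∫ s in (t₀ + 1*Δt)..(t₀ + 3*Δt), (c - s)^2/2 * d3 s)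
      = (∫ s in (t₀ + 1*Δt)..(t₀ + 2*Δt), (c - s)^2/2 * d3 s)
        + (∫ s in (t₀ + 2*Δt)..(t₀ + 3*Δt), (c - s)^2/2 * d3 s) := by
    intro c
    rw [integral_add_adjacent_intervals (hk c (t₀ + 1*Δt) (t₀ + 2*Δt)) (hk c (t₀ + 2*Δt) (t₀ + 3*Δt))]
  have E0 : (∫ s in (t₀ + 3*Δt)..t₀, (t₀ - s)^2/2 * d3 s)
      = -((∫ s in t₀..(t₀ + 1*Δt), (t₀ - s)^2/2 * d3 s)
        + (∫ s in (t₀ + 1*Δt)..(t₀ + 2*Δt), (t₀ - s)^2/2 * d3 s)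
        + (∫ s in (t₀ + 2*Δt)..(t₀ + 3*Δt), (t₀ - s)^2/2 * d3 s)) := by
    rw [integral_symm t₀ (t₀ + 3*Δt), hsplit3 t₀]
  have E1 : (∫ s in (t₀ + 3*Δt)..(t₀ + 1*Δt), ((t₀ + 1*Δt) - s)^2/2 * d3 s)
      = -((∫ s in (t₀ + 1*Δt)..(t₀ + 2*Δt), ((t₀ + 1*Δt) - s)^2/2 * d3 s)
        + (∫ s in (t₀ + 2*Δt)..(t₀ + 3*Δt), ((t₀ + 1*Δt) - s)^2/2 * d3 s)) := by
    rw [integral_symm (t₀ + 1*Δt) (t₀ + 3*Δt), hsplit2 (t₀ + 1*Δt)]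
  have E2 : (∫ s in (t₀ + 3*Δt)..(t₀ + 2*Δt), ((t₀ + 2*Δt) - s)^2/2 * d3 s)
      = -(∫ s in (t₀ + 2*Δt)..(t₀ + 3*Δt), ((t₀ + 2*Δt) - s)^2/2 * d3 s) := by
    rw [integral_symm (t₀ + 2*Δt) (t₀ + 3*Δt)]
  -- piece kernels
  have hA1 : (∫ s in (t₀ + 1*Δt)..(t₀ + 2*Δt), ((t₀ - s)^2/2 - 3*((t₀ + 1*Δt) - s)^2) * d3 s)
      = (∫ s in (t₀ + 1*Δt)..(t₀ + 2*Δt), (t₀ - s)^2/2 * d3 s)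
        - 6 * (∫ s in (t₀ + 1*Δt)..(t₀ + 2*Δt), ((t₀ + 1*Δt) - s)^2/2 * d3 s) := by
    rw [← intervalIntegral.integral_const_mul,
      ← intervalIntegral.integral_sub (hk t₀ _ _) ((hk (t₀ + 1*Δt) _ _).const_mul 6)]
    exact integral_congr (fun s _ => by ring)
  have hA2 : (∫ s in (t₀ + 2*Δt)..(t₀ + 3*Δt),
        ((t₀ - s)^2/2 - 3*((t₀ + 1*Δt) - s)^2 + (15/2)*((t₀ + 2*Δt) - s)^2) * d3 s)
      = (∫ s in (t₀ + 2*Δt)..(t₀ + 3*Δt), (t₀ - s)^2/2 * d3 s)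
        - 6 * (∫ s in (t₀ + 2*Δt)..(t₀ + 3*Δt), ((t₀ + 1*Δt) - s)^2/2 * d3 s)
        + 15 * (∫ s in (t₀ + 2*Δt)..(t₀ + 3*Δt), ((t₀ + 2*Δt) - s)^2/2 * d3 s) := by
    rw [← intervalIntegral.integral_const_mul (r := (6:ℝ)),
      ← intervalIntegral.integral_const_mul (r := (15:ℝ)),
      ← intervalIntegral.integral_sub (hk t₀ _ _) ((hk (t₀ + 1*Δt) _ _).const_mul 6),
      ← intervalIntegral.integral_add
        ((hk t₀ _ _).sub ((hk (t₀ + 1*Δt) _ _).const_mul 6)) ((hk (t₀ + 2*Δt) _ _).const_mul 15)]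
    exact integral_congr (fun s _ => by ring)
  -- the master identity
  have hN : 10 * u (t₀ + 3*Δt) - 15 * u (t₀ + 2*Δt) + 6 * u (t₀ + 1*Δt) - u t₀
        - 6*Δt * deriv u (t₀ + 3*Δt)
      = (∫ s in t₀..(t₀ + 1*Δt), ((t₀ - s)^2/2) * d3 s)
        + (∫ s in (t₀ + 1*Δt)..(t₀ + 2*Δt), ((t₀ - s)^2/2 - 3*((t₀ + 1*Δt) - s)^2) * d3 s)
        + (∫ s in (t₀ + 2*Δt)..(t₀ + 3*Δt),
            ((t₀ - s)^2/2 - 3*((t₀ + 1*Δt) - s)^2 + (15/2)*((t₀ + 2*Δt) - s)^2) * d3 s) := by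
    rw [hA1, hA2]
    linear_combination T0 - 6 * T1 + 15 * T2 - E0 + 6 * E1 - 15 * E2
  -- Cauchy-Schwarz on each piece
  have hcs0 : (∫ s in t₀..(t₀ + 1*Δt), ((t₀ - s)^2/2) * d3 s)^2
      ≤ (∫ s in t₀..(t₀ + 1*Δt), ((t₀ - s)^2/2)^2) * (∫ s in t₀..(t₀ + 1*Δt), d3 s^2) :=
    my_cs (fun s => (t₀ - s)^2/2) d3 (by fun_prop) hd3c _ _ h01
  have hcs1 : (∫ s in (t₀ + 1*Δt)..(t₀ + 2*Δt), ((t₀ - s)^2/2 - 3*((t₀ + 1*Δt) - s)^2) * d3 s)^2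
      ≤ (∫ s in (t₀ + 1*Δt)..(t₀ + 2*Δt), ((t₀ - s)^2/2 - 3*((t₀ + 1*Δt) - s)^2)^2)
        * (∫ s in (t₀ + 1*Δt)..(t₀ + 2*Δt), d3 s^2) :=
    my_cs (fun s => (t₀ - s)^2/2 - 3*((t₀ + 1*Δt) - s)^2) d3 (by fun_prop) hd3c _ _ h12
  have hcs2 : (∫ s in (t₀ + 2*Δt)..(t₀ + 3*Δt),
        ((t₀ - s)^2/2 - 3*((t₀ + 1*Δt) - s)^2 + (15/2)*((t₀ + 2*Δt) - s)^2) * d3 s)^2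
      ≤ (∫ s in (t₀ + 2*Δt)..(t₀ + 3*Δt),
          ((t₀ - s)^2/2 - 3*((t₀ + 1*Δt) - s)^2 + (15/2)*((t₀ + 2*Δt) - s)^2)^2)
        * (∫ s in (t₀ + 2*Δt)..(t₀ + 3*Δt), d3 s^2) :=
    my_cs (fun s => (t₀ - s)^2/2 - 3*((t₀ + 1*Δt) - s)^2 + (15/2)*((t₀ + 2*Δt) - s)^2) d3
      (by fun_prop) hd3c _ _ h23
  -- kernel L² bounds
  have hK0 : (∫ s in t₀..(t₀ + 1*Δt), ((t₀ - s)^2/2)^2) ≤ Δt * (Δt^2/2)^2 := by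
    calc (∫ s in t₀..(t₀ + 1*Δt), ((t₀ - s)^2/2)^2)
        ≤ ∫ _s in t₀..(t₀ + 1*Δt), (Δt^2/2)^2 := by
          apply intervalIntegral.integral_mono_on h01
            ((by fun_prop : Continuous fun s : ℝ => ((t₀ - s)^2/2)^2).intervalIntegrable _ _)
            (intervalIntegrable_const)
          intro s hs
          obtain ⟨hl, hr⟩ := hs
          apply sq_le_sq'
          · nlinarith [sq_nonneg (t₀ - s), sq_nonneg Δt]
          · nlinarith [mul_nonneg (by linarith : (0:ℝ) ≤ s - t₀) (by linarith : (0:ℝ) ≤ t₀ + Δt - s),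
              mul_nonneg hΔt.le (by linarith : (0:ℝ) ≤ t₀ + Δt - s)]
      _ = Δt * (Δt^2/2)^2 := by rw [intervalIntegral.integral_const, smul_eq_mul]; ring
  have hK1 : (∫ s in (t₀ + 1*Δt)..(t₀ + 2*Δt), ((t₀ - s)^2/2 - 3*((t₀ + 1*Δt) - s)^2)^2)
      ≤ Δt * (Δt^2)^2 := by
    calc (∫ s in (t₀ + 1*Δt)..(t₀ + 2*Δt), ((t₀ - s)^2/2 - 3*((t₀ + 1*Δt) - s)^2)^2)
        ≤ ∫ _s in (t₀ + 1*Δt)..(t₀ + 2*Δt), (Δt^2)^2 := by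
          apply intervalIntegral.integral_mono_on h12
            ((by fun_prop : Continuous fun s : ℝ =>
              ((t₀ - s)^2/2 - 3*((t₀ + 1*Δt) - s)^2)^2).intervalIntegrable _ _)
            (intervalIntegrable_const)
          intro s hs
          obtain ⟨hl, hr⟩ := hs
          apply sq_le_sq'
          · nlinarith [mul_nonneg (by linarith : (0:ℝ) ≤ t₀ + 2*Δt - s)
              (by linarith : (0:ℝ) ≤ 5*(s - (t₀ + 1*Δt)) + 3*Δt)]
          · nlinarith [sq_nonneg (5*(s - (t₀ + 1*Δt)) - Δt), sq_nonneg Δt]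
      _ = Δt * (Δt^2)^2 := by rw [intervalIntegral.integral_const, smul_eq_mul]; ring
  have hK2 : (∫ s in (t₀ + 2*Δt)..(t₀ + 3*Δt),
        ((t₀ - s)^2/2 - 3*((t₀ + 1*Δt) - s)^2 + (15/2)*((t₀ + 2*Δt) - s)^2)^2)
      ≤ Δt * ((9/5)*Δt^2)^2 := by
    calc (∫ s in (t₀ + 2*Δt)..(t₀ + 3*Δt),
          ((t₀ - s)^2/2 - 3*((t₀ + 1*Δt) - s)^2 + (15/2)*((t₀ + 2*Δt) - s)^2)^2)
        ≤ ∫ _s in (t₀ + 2*Δt)..(t₀ + 3*Δt), ((9/5)*Δt^2)^2 := by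
          apply intervalIntegral.integral_mono_on h23
            ((by fun_prop : Continuous fun s : ℝ =>
              ((t₀ - s)^2/2 - 3*((t₀ + 1*Δt) - s)^2 + (15/2)*((t₀ + 2*Δt) - s)^2)^2).intervalIntegrable _ _)
            (intervalIntegrable_const)
          intro s hs
          obtain ⟨hl, hr⟩ := hs
          apply sq_le_sq'
          · nlinarith [sq_nonneg (5*(s - (t₀ + 2*Δt)) - 2*Δt)]
          · nlinarith [mul_nonneg (by linarith : (0:ℝ) ≤ t₀ + 3*Δt - s)
              (by linarith : (0:ℝ) ≤ 5*(s - (t₀ + 2*Δt)) + Δt), sq_nonneg Δt]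
      _ = Δt * ((9/5)*Δt^2)^2 := by rw [intervalIntegral.integral_const, smul_eq_mul]; ring
  -- nonnegativity and splitting of the RHS integral
  have hg2i : ∀ a b : ℝ, IntervalIntegrable (fun s => d3 s^2) MeasureTheory.volume a b :=
    fun a b => ((hd3c.pow 2).intervalIntegrable a b)
  have hI0 : 0 ≤ ∫ s in t₀..(t₀ + 1*Δt), d3 s^2 :=
    intervalIntegral.integral_nonneg h01 (fun s _ => sq_nonneg _)
  have hI1 : 0 ≤ ∫ s in (t₀ + 1*Δt)..(t₀ + 2*Δt), d3 s^2 :=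
    intervalIntegral.integral_nonneg h12 (fun s _ => sq_nonneg _)
  have hI2 : 0 ≤ ∫ s in (t₀ + 2*Δt)..(t₀ + 3*Δt), d3 s^2 :=
    intervalIntegral.integral_nonneg h23 (fun s _ => sq_nonneg _)
  have hIsplit : (∫ s in t₀..(t₀ + 3*Δt), d3 s^2)
      = (∫ s in t₀..(t₀ + 1*Δt), d3 s^2) + (∫ s in (t₀ + 1*Δt)..(t₀ + 2*Δt), d3 s^2)
        + (∫ s in (t₀ + 2*Δt)..(t₀ + 3*Δt), d3 s^2) := by
    rw [integral_add_adjacent_intervals (hg2i t₀ (t₀ + 1*Δt)) (hg2i (t₀ + 1*Δt) (t₀ + 2*Δt)),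
      integral_add_adjacent_intervals (hg2i t₀ (t₀ + 2*Δt)) (hg2i (t₀ + 2*Δt) (t₀ + 3*Δt))]
  -- combine
  set A0 := ∫ s in t₀..(t₀ + 1*Δt), ((t₀ - s)^2/2) * d3 s with hA0d
  set A1 := ∫ s in (t₀ + 1*Δt)..(t₀ + 2*Δt), ((t₀ - s)^2/2 - 3*((t₀ + 1*Δt) - s)^2) * d3 s with hA1d
  set A2 := ∫ s in (t₀ + 2*Δt)..(t₀ + 3*Δt),
      ((t₀ - s)^2/2 - 3*((t₀ + 1*Δt) - s)^2 + (15/2)*((t₀ + 2*Δt) - s)^2) * d3 s with hA2d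
  set I0 := ∫ s in t₀..(t₀ + 1*Δt), d3 s^2 with hI0d
  set I1 := ∫ s in (t₀ + 1*Δt)..(t₀ + 2*Δt), d3 s^2 with hI1d
  set I2 := ∫ s in (t₀ + 2*Δt)..(t₀ + 3*Δt), d3 s^2 with hI2d
  clear_value A0 A1 A2 I0 I1 I2
  have hb0 : A0^2 ≤ (Δt * (Δt^2/2)^2) * I0 :=
    le_trans hcs0 (mul_le_mul_of_nonneg_right hK0 hI0)
  have hb1 : A1^2 ≤ (Δt * (Δt^2)^2) * I1 :=
    le_trans hcs1 (mul_le_mul_of_nonneg_right hK1 hI1)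
  have hb2 : A2^2 ≤ (Δt * ((9/5)*Δt^2)^2) * I2 :=
    le_trans hcs2 (mul_le_mul_of_nonneg_right hK2 hI2)
  clear T0 T1 T2 E0 E1 E2 hsplit3 hsplit2 hA1 hA2 hk hg2i hA0d hA1d hA2d hI0d hI1d hI2d
    hcs0 hcs1 hcs2 hK0 hK1 hK2 h1 h2 h3 hd3c hu
  have hΔ5 : (0:ℝ) ≤ Δt^5 := by positivity
  have hc0 : A0^2 ≤ 28 * Δt^5 * I0 := by nlinarith only [hb0, hΔ5, hI0, mul_nonneg hΔ5 hI0]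
  have hc1 : A1^2 ≤ 28 * Δt^5 * I1 := by nlinarith only [hb1, hΔ5, hI1, mul_nonneg hΔ5 hI1]
  have hc2 : A2^2 ≤ 28 * Δt^5 * I2 := by nlinarith only [hb2, hΔ5, hI2, mul_nonneg hΔ5 hI2]
  have h6 : (0:ℝ) < 6*Δt := by linarith
  simp only [hiter, sq_abs]
  rw [hIsplit]
  have hval : (10 * u (t₀ + 3*Δt) - 15 * u (t₀ + 2*Δt) + 6 * u (t₀ + 1*Δt) - u t₀) / (6*Δt)
      - deriv u (t₀ + 3*Δt) = (A0 + A1 + A2) / (6*Δt) := by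
    have h1Δ : t₀ + 1*Δt = t₀ + Δt := by ring
    rw [h1Δ] at hN ⊢
    field_simp
    linear_combination (norm := ring_nf) hN
  rw [hval, div_pow, div_le_iff₀ (by positivity)]
  calc (A0 + A1 + A2)^2 ≤ 3*(A0^2 + A1^2 + A2^2) := sum3_sq A0 A1 A2
    _ ≤ 3*((28 * Δt^5 * I0) + (28 * Δt^5 * I1) + (28 * Δt^5 * I2)) := by linarith only [hc0, hc1, hc2]
    _ = 7/3 * Δt^3 * (I0 + I1 + I2) * (6*Δt)^2 := by ring
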